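/- Assume the passing structure and let (g, h) satisfy the joint optimality equation. Then there exists a function h̃ : S → ℝ satisfying the passing-last equation relative to (g, h) (Lemma 4: existence of the relative value function of the passing-last atomic MDP, constructible layer by layer in the idle count ι). -/

import Mathlib

open Filter Finset Matrix

/-- The state reached after `n` atomic steps following the action sequence `a` from `s`. -/
def rollSeq {S A : Type*} (T : S → A → S) (s : S) (a : ℕ → A) : ℕ → S
  | 0 => s
  | n + 1 => T (rollSeq T s a n) (a n)

/-- The first `K` entries of the action sequence `a` form a feasible atomic sequence at `s`. -/
def FeasibleSeq {S A : Type*} (T : S → A → S) (As : S → Finset A) (K : ℕ) (s : S)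
    (a : ℕ → A) : Prop :=
  ∀ k, k < K → a k ∈ As (rollSeq T s a k)

/-- Post-decision state of an atomic sequence. -/
def postState {S A : Type*} (T : S → A → S) (K : ℕ) (s : S) (a : ℕ → A) : S :=
  rollSeq T s a K

/-- Reward of an atomic sequence. -/
def seqReward {S A : Type*} (T : S → A → S) (rhat : A → ℝ) (rH : S → ℝ) (K : ℕ) (s : S)
    (a : ℕ → A) : ℝ :=
  (∑ k ∈ Finset.range K, rhat (a k)) + rH (rollSeq T s a K)

/-- A row-stochastic matrix. -/
def RowStochastic {S : Type*} [Fintype S] (P : Matrix S S ℝ) : Prop :=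
  (∀ s s', 0 ≤ P s s') ∧ ∀ s, ∑ s', P s s' = 1

/-- Transition matrix of a deterministic joint policy. -/
def jointP {S A : Type*} (T : S → A → S) (Psys : Matrix S S ℝ) (K : ℕ) (σ : S → ℕ → A) :
    Matrix S S ℝ :=
  Matrix.of fun s s' => Psys (postState T K s (σ s)) s'

/-- Per-period reward vector of a deterministic joint policy. -/
def jointR {S A : Type*} (T : S → A → S) (rhat : A → ℝ) (rH : S → ℝ) (K : ℕ)
    (σ : S → ℕ → A) (s : S) : ℝ :=
  seqReward T rhat rH K s (σ s)

/-- Rollout states of a step-dependent atomic policy. -/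
def rollDep {S A : Type*} (T : S → A → S) (μ : ℕ → S → A) (s : S) : ℕ → S
  | 0 => s
  | n + 1 => T (rollDep T μ s n) (μ n (rollDep T μ s n))

/-- Transition matrix of a deterministic step-dependent atomic policy. -/
def depP {S A : Type*} (T : S → A → S) (Psys : Matrix S S ℝ) (K : ℕ) (μ : ℕ → S → A) :
    Matrix S S ℝ :=
  Matrix.of fun s s' => Psys (rollDep T μ s K) s'

/-- Per-period reward vector of a deterministic step-dependent atomic policy. -/
def depR {S A : Type*} (T : S → A → S) (rhat : A → ℝ) (rH : S → ℝ) (K : ℕ)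
    (μ : ℕ → S → A) (s : S) : ℝ :=
  (∑ k ∈ Finset.range K, rhat (μ k (rollDep T μ s k))) + rH (rollDep T μ s K)

/-- Transition matrix of a deterministic step-independent atomic policy. -/
def indP {S A : Type*} (T : S → A → S) (Psys : Matrix S S ℝ) (K : ℕ) (pol : S → A) :
    Matrix S S ℝ :=
  depP T Psys K fun _ => pol

/-- Per-period reward vector of a deterministic step-independent atomic policy. -/
def indR {S A : Type*} (T : S → A → S) (rhat : A → ℝ) (rH : S → ℝ) (K : ℕ)
    (pol : S → A) (s : S) : ℝ :=
  depR T rhat rH K (fun _ => pol) s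

/-- `n`-horizon average reward from state `s` under transition matrix `P` and reward `r`. -/
noncomputable def avgRew {S : Type*} [Fintype S] [DecidableEq S] (P : Matrix S S ℝ)
    (r : S → ℝ) (s : S) (n : ℕ) : ℝ :=
  (n : ℝ)⁻¹ * ∑ t ∈ Finset.range n, ((P ^ t) *ᵥ r) s

/-- The joint optimality equation for `(g, h)`. -/
def JointOptEq {S A : Type*} [Fintype S] (T : S → A → S) (As : S → Finset A) (rhat : A → ℝ)
    (rH : S → ℝ) (Psys : Matrix S S ℝ) (K : ℕ) (g : ℝ) (h : S → ℝ) : Prop :=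
  ∀ s, IsGreatest {x : ℝ | ∃ a : ℕ → A, FeasibleSeq T As K s a ∧
    x = seqReward T rhat rH K s a - g + ∑ s', Psys (postState T K s a) s' * h s'} (h s)

/-- The atomic optimality equations, with atomic steps indexed `0, …, K-1`. -/
def AtomicOptEq {S A : Type*} [Fintype S] (T : S → A → S) (As : S → Finset A) (rhat : A → ℝ)
    (rH : S → ℝ) (Psys : Matrix S S ℝ) (K : ℕ) (g : ℝ) (hhat : ℕ → S → ℝ) : Prop :=
  (∀ k, k + 1 < K → ∀ s, IsGreatest
      {x : ℝ | ∃ a ∈ As s, x = rhat a - g / (K : ℝ) + hhat (k + 1) (T s a)} (hhat k s)) ∧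
  ∀ s, IsGreatest
      {x : ℝ | ∃ a ∈ As s,
        x = rhat a - g / (K : ℝ) + rH (T s a) + ∑ s', Psys (T s a) s' * hhat 0 s'}
      (hhat (K - 1) s)

/-- The passing structure: a distinguished passing action and an idle count. -/
def PassingStruct {S A : Type*} (T : S → A → S) (As : S → Finset A) (rhat : A → ℝ) (K : ℕ)
    (pass : A) (ι : S → ℕ) : Prop :=
  (∀ s, pass ∈ As s) ∧ (∀ s, T s pass = s) ∧ rhat pass = 0 ∧ (∀ s, ι s ≤ K) ∧
  (∀ s, ∀ a ∈ As s, a ≠ pass → 1 ≤ ι s ∧ ι (T s a) = ι s - 1) ∧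
  ∀ s, ι s = 0 → As s = {pass}

/-- The passing-last equation of `h̃` relative to `(g, h)`. -/
def PassLastEq {S A : Type*} [Fintype S] [DecidableEq A] (T : S → A → S) (As : S → Finset A)
    (rhat : A → ℝ) (rH : S → ℝ) (Psys : Matrix S S ℝ) (pass : A) (g : ℝ)
    (h htil : S → ℝ) : Prop :=
  ∀ s, IsGreatest {x : ℝ | ∃ a ∈ As s,
    x = if a = pass then rH s - g + ∑ s', Psys s s' * h s'
        else rhat a + htil (T s a)} (htil s)

noncomputable def passH {S A : Type*} [DecidableEq A] (T : S → A → S) (As : S → Finset A)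
    (hAs : ∀ s, (As s).Nonempty) (rhat : A → ℝ) (c : S → ℝ) (pass : A) : ℕ → S → ℝ
  | 0 => c
  | n + 1 => fun s =>
      ((As s).image (fun a => if a = pass then c s
        else rhat a + passH T As hAs rhat c pass n (T s a))).max' ((hAs s).image _)

lemma passH_succ {S A : Type*} [DecidableEq A] (T : S → A → S) (As : S → Finset A)
    (hAs : ∀ s, (As s).Nonempty) (rhat : A → ℝ) (c : S → ℝ) (pass : A) (n : ℕ) (s : S) :
    passH T As hAs rhat c pass (n + 1) s =
      ((As s).image (fun a => if a = pass then c s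
        else rhat a + passH T As hAs rhat c pass n (T s a))).max' ((hAs s).image _) := rfl

lemma passH_stab {S A : Type*} [DecidableEq A] (T : S → A → S) (As : S → Finset A)
    (hAs : ∀ s, (As s).Nonempty) (rhat : A → ℝ) (c : S → ℝ) (pass : A) (ι : S → ℕ)
    (hdec : ∀ s, ∀ a ∈ As s, a ≠ pass → 1 ≤ ι s ∧ ι (T s a) = ι s - 1)
    (hzero : ∀ s, ι s = 0 → As s = {pass}) :
    ∀ n s, ι s ≤ n → passH T As hAs rhat c pass (n + 1) s = passH T As hAs rhat c pass n s := by
  intro n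
  induction n with
  | zero =>
    intro s hs
    have h0 := hzero s (Nat.le_zero.mp hs)
    rw [passH_succ]
    apply le_antisymm
    · apply Finset.max'_le
      intro y hy
      obtain ⟨a, ha, rfl⟩ := Finset.mem_image.mp hy
      rw [h0, Finset.mem_singleton] at ha
      simp [ha, passH]
    · apply Finset.le_max'
      refine Finset.mem_image.mpr ⟨pass, ?_, by simp [passH]⟩
      rw [h0]; exact Finset.mem_singleton_self _
  | succ n ih =>
    intro s hs
    rw [passH_succ, passH_succ]
    congr 1
    apply Finset.image_congr
    intro a ha
    by_cases hp : a = pass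
    · simp [hp]
    · have h2 := hdec s a ha hp
      have : ι (T s a) ≤ n := by omega
      simp only [hp, if_neg, ih (T s a) this]

lemma passH_eq {S A : Type*} [DecidableEq A] (T : S → A → S) (As : S → Finset A)
    (hAs : ∀ s, (As s).Nonempty) (rhat : A → ℝ) (c : S → ℝ) (pass : A) (ι : S → ℕ)
    (hdec : ∀ s, ∀ a ∈ As s, a ≠ pass → 1 ≤ ι s ∧ ι (T s a) = ι s - 1)
    (hzero : ∀ s, ι s = 0 → As s = {pass}) :
    ∀ n s, ι s ≤ n → passH T As hAs rhat c pass n s = passH T As hAs rhat c pass (ι s) s := by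
  intro n
  induction n with
  | zero => intro s hs; rw [Nat.le_zero.mp hs]
  | succ n ih =>
    intro s hs
    rcases Nat.lt_or_ge (ι s) (n + 1) with h1 | h1
    · rw [passH_stab T As hAs rhat c pass ι hdec hzero n s (by omega), ih s (by omega)]
    · have : ι s = n + 1 := by omega
      rw [this]

/-- **Lemma 4**: under the passing structure, if `(g, h)` solves the joint optimality equation,
then there exists a relative value function `h̃` of the passing-last atomic MDP, i.e. a solution
of the passing-last equation relative to `(g, h)`. -/
theorem stmt6 {S A : Type*} [Fintype S] [DecidableEq S] [Nonempty S] [Fintype A] [DecidableEq A]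
    (T : S → A → S) (As : S → Finset A) (hAs : ∀ s, (As s).Nonempty)
    (rhat : A → ℝ) (rH : S → ℝ) (Psys : Matrix S S ℝ) (hPsys : RowStochastic Psys)
    (K : ℕ) (hK : 1 ≤ K) (pass : A) (ι : S → ℕ)
    (hpass : PassingStruct T As rhat K pass ι)
    (g : ℝ) (h : S → ℝ) (hopt : JointOptEq T As rhat rH Psys K g h) :
    ∃ htil : S → ℝ, PassLastEq T As rhat rH Psys pass g h htil := by
  classical
  obtain ⟨_, hpassT, _, hiK, hdec, hzero⟩ := hpass
  set c : S → ℝ := fun s => rH s - g + ∑ s', Psys s s' * h s' with hc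
  refine ⟨passH T As hAs rhat c pass K, ?_⟩
  intro s
  obtain ⟨m, hm⟩ : ∃ m, K = m + 1 := ⟨K - 1, by omega⟩
  have key : ∀ a ∈ As s, (if a = pass then c s
      else rhat a + passH T As hAs rhat c pass m (T s a)) =
      (if a = pass then rH s - g + ∑ s', Psys s s' * h s'
      else rhat a + passH T As hAs rhat c pass K (T s a)) := by
    intro a ha
    by_cases hp : a = pass
    · simp [hp, hc]
    · have h2 := hdec s a ha hp
      have h3 : ι (T s a) ≤ m := by have := hiK s; omega
      simp only [hp, if_neg, ↓reduceIte,
        passH_eq T As hAs rhat c pass ι hdec hzero m (T s a) h3,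
        passH_eq T As hAs rhat c pass ι hdec hzero K (T s a) (by omega)]
  set f : A → ℝ := fun a => if a = pass then c s
    else rhat a + passH T As hAs rhat c pass m (T s a) with hf
  have hKs : passH T As hAs rhat c pass K s = ((As s).image f).max' ((hAs s).image _) := by
    rw [hm]; rfl
  constructor
  · obtain ⟨v, hv, hveq⟩ := Finset.mem_image.mp (Finset.max'_mem ((As s).image f)
      ((hAs s).image _))
    refine ⟨v, hv, ?_⟩
    rw [hKs, ← hveq]
    exact key v hv
  · rintro x ⟨a, ha, rfl⟩
    rw [hKs, ← key a ha]
    exact Finset.le_max' ((As s).image f) (f a) (Finset.mem_image_of_mem f ha)
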